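/- Let q ≥ 2 be even, p > q − 1, f(x) = x^q/q + x^(p+1)/(p+1), x_k ∈ ℝ with x_k ≠ 0, and set y_k = −|x_k|^(p/(q−1))·sign(x_k). Let m_k(y) = t_{x_k}^p(y) + σ|y − x_k|^(p+1) be the regularized p-th order Taylor model with 0 ≤ σ ≤ 1/(p+1). Then |m_k'(y_k)| ≤ 3·|y_k − x_k|^p. -/

import Mathlib

theorem stmt_16 (q p : ℕ) (hq2 : 2 ≤ q) (hqeven : Even q) (hpq : q - 1 < p)
    (xk σ : ℝ) (hxk : xk ≠ 0) (hσ0 : 0 ≤ σ) (hσ : σ ≤ 1 / (p + 1))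
    (yk : ℝ) (hyk : yk = -(|xk| ^ ((p : ℝ) / ((q : ℝ) - 1))) * Real.sign xk)
    (m : ℝ → ℝ)
    (hm : ∀ y, m y = (y ^ q / q + y ^ (p + 1) / (p + 1))
        - (1 / (p + 1)) * (y - xk) ^ (p + 1) + σ * |y - xk| ^ (p + 1)) :
    |deriv m yk| ≤ 3 * |yk - xk| ^ p := by
  have hq1 : 1 ≤ q := le_trans one_le_two hq2
  have hp2 : 2 ≤ p := by omega
  have hp0 : p ≠ 0 := by omega
  set r : ℝ := (p : ℝ) / ((q : ℝ) - 1) with hr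
  set B : ℝ := |xk| ^ r with hB
  have hBposabs : (0:ℝ) < |xk| := abs_pos.2 hxk
  have hBpos : 0 < B := Real.rpow_pos_of_pos hBposabs r
  have hqsub : (q : ℝ) - 1 ≠ 0 := by
    have : (2:ℝ) ≤ (q:ℝ) := by exact_mod_cast hq2
    linarith
  have hrmul : r * ((q:ℝ) - 1) = (p:ℝ) := div_mul_cancel₀ _ hqsub
  have hBq : B ^ (q - 1) = |xk| ^ p := by
    rw [hB, ← Real.rpow_natCast (|xk| ^ r) (q-1), ← Real.rpow_mul hBposabs.le]
    have : ((q - 1 : ℕ) : ℝ) = (q : ℝ) - 1 := by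
      push_cast [Nat.cast_sub hq1]; ring
    rw [this, hrmul, Real.rpow_natCast]
  have hodd : Odd (q - 1) := Nat.Even.sub_odd hq1 hqeven odd_one
  -- derivative computation
  have hne : yk - xk ≠ 0 := by
    rcases hxk.lt_or_gt with hx | hx
    · have hs : Real.sign xk = -1 := Real.sign_of_neg hx
      rw [hyk, hs]; nlinarith
    · have hs : Real.sign xk = 1 := Real.sign_of_pos hx
      rw [hyk, hs]; nlinarith
  set sg : ℝ := (SignType.sign (yk - xk) : ℝ) with hsg
  have habs : HasDerivAt (fun y => |y - xk|) sg yk := by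
    simpa [Function.comp_def] using (hasDerivAt_abs hne).comp yk ((hasDerivAt_id yk).sub_const xk)
  have hterm : HasDerivAt (fun y => |y - xk| ^ (p+1))
      (((p:ℝ)+1) * |yk - xk| ^ p * sg) yk := by
    have := habs.pow (p+1)
    simpa [Nat.add_sub_cancel, Pi.pow_def] using this
  have h1 : HasDerivAt (fun y : ℝ => y ^ q / q) (yk ^ (q-1)) yk := by
    have hq0 : (q : ℝ) ≠ 0 := by positivity
    have := (hasDerivAt_pow q yk).div_const (q : ℝ)
    simpa [mul_div_assoc, mul_div_cancel_left₀ _ hq0] using this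
  have h2 : HasDerivAt (fun y : ℝ => y ^ (p+1) / (p+1)) (yk ^ p) yk := by
    have hp1 : ((p:ℝ) + 1) ≠ 0 := by positivity
    have := (hasDerivAt_pow (p+1) yk).div_const ((p:ℝ)+1)
    have h' : (↑(p + 1) : ℝ) * yk ^ (p + 1 - 1) / (↑p + 1) = yk ^ p := by
      push_cast
      rw [mul_comm, mul_div_assoc, div_self hp1, mul_one]
    rw [h'] at this
    exact_mod_cast this
  have h3 : HasDerivAt (fun y : ℝ => (1 / ((p:ℝ)+1)) * (y - xk) ^ (p+1))
      ((yk - xk) ^ p) yk := by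
    have hp1 : ((p:ℝ) + 1) ≠ 0 := by positivity
    have hb : HasDerivAt (fun y : ℝ => (y - xk) ^ (p+1))
        ((↑(p+1) : ℝ) * (yk - xk) ^ p * 1) yk := by
      simpa [Nat.add_sub_cancel, Pi.pow_def] using ((hasDerivAt_id yk).sub_const xk).pow (p+1)
    have := hb.const_mul (1 / ((p:ℝ)+1))
    have h' : 1 / ((p:ℝ)+1) * ((↑(p+1) : ℝ) * (yk - xk) ^ p * 1) = (yk - xk) ^ p := by
      push_cast
      field_simp
    rwa [h'] at this
  have hD : HasDerivAt m
      (yk ^ (q-1) + yk ^ p - (yk - xk) ^ p + σ * (((p:ℝ)+1) * |yk - xk| ^ p * sg)) yk := by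
    have hmf : m = fun y => (y ^ q / (q:ℝ) + y ^ (p + 1) / ((p:ℝ) + 1))
        - (1 / ((p:ℝ) + 1)) * (y - xk) ^ (p + 1) + σ * |y - xk| ^ (p + 1) := by
      funext y; rw [hm y]
    rw [hmf]
    exact ((h1.add h2).sub h3).add (hterm.const_mul σ)
  rw [hD.deriv]
  -- bound
  have hsg1 : |sg| = 1 := by
    rcases hne.lt_or_gt with h | h
    · simp [hsg, sign_neg h]
    · simp [hsg, sign_pos h]
  have hσp : σ * ((p:ℝ)+1) ≤ 1 := by
    have hp1 : (0:ℝ) < (p:ℝ)+1 := by positivity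
    calc σ * ((p:ℝ)+1) ≤ (1/((p:ℝ)+1)) * ((p:ℝ)+1) := by
          exact mul_le_mul_of_nonneg_right hσ hp1.le
      _ = 1 := by field_simp
  have hykq : |yk ^ (q-1)| = |xk| ^ p := by
    rcases hxk.lt_or_gt with hx | hx
    · have hs : Real.sign xk = -1 := Real.sign_of_neg hx
      have : yk = B := by rw [hyk, hs]; ring
      rw [this, hBq]; exact abs_of_nonneg (by positivity)
    · have hs : Real.sign xk = 1 := Real.sign_of_pos hx
      have : yk = -B := by rw [hyk, hs]; ring
      rw [this, hodd.neg_pow, abs_neg, hBq]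
      exact abs_of_nonneg (by positivity)
  have hykabs : |yk| = B := by
    rcases hxk.lt_or_gt with hx | hx
    · have hs : Real.sign xk = -1 := Real.sign_of_neg hx
      rw [hyk, hs]; rw [show -B * (-1) = B by ring]; exact abs_of_pos hBpos
    · have hs : Real.sign xk = 1 := Real.sign_of_pos hx
      rw [hyk, hs]; rw [show -B * 1 = -B by ring, abs_neg]; exact abs_of_pos hBpos
  have hsum : |yk - xk| = B + |xk| := by
    rcases hxk.lt_or_gt with hx | hx
    · have hs : Real.sign xk = -1 := Real.sign_of_neg hx
      have hy : yk = B := by rw [hyk, hs]; ring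
      rw [hy, abs_of_pos (by linarith), abs_of_neg hx]; ring
    · have hs : Real.sign xk = 1 := Real.sign_of_pos hx
      have hy : yk = -B := by rw [hyk, hs]; ring
      rw [hy, abs_of_neg (by linarith : -B - xk < 0), abs_of_pos hx]; ring
  have hkey : |xk| ^ p + B ^ p ≤ |yk - xk| ^ p := by
    rw [hsum, add_comm B |xk|]
    exact pow_add_pow_le hBposabs.le hBpos.le hp0
  have htri : |yk ^ (q-1) + yk ^ p - (yk - xk) ^ p + σ * (((p:ℝ)+1) * |yk - xk| ^ p * sg)|
      ≤ |yk ^ (q-1)| + |yk ^ p| + |(yk - xk) ^ p| + |σ * (((p:ℝ)+1) * |yk - xk| ^ p * sg)| := by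
    calc _ ≤ |yk ^ (q-1) + yk ^ p - (yk - xk) ^ p| + |σ * (((p:ℝ)+1) * |yk - xk| ^ p * sg)| :=
          abs_add_le _ _
      _ ≤ |yk ^ (q-1) + yk ^ p| + |(yk - xk) ^ p| + |σ * (((p:ℝ)+1) * |yk - xk| ^ p * sg)| := by
          gcongr; exact abs_sub _ _
      _ ≤ _ := by gcongr; exact abs_add_le _ _
  refine htri.trans ?_
  have e1 : |yk ^ p| = B ^ p := by rw [abs_pow, hykabs]
  have e2 : |(yk - xk) ^ p| = |yk - xk| ^ p := abs_pow _ _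
  have e3 : |σ * (((p:ℝ)+1) * |yk - xk| ^ p * sg)| ≤ |yk - xk| ^ p := by
    rw [abs_mul, abs_mul, abs_mul, hsg1, mul_one]
    have : |σ| = σ := abs_of_nonneg hσ0
    have h2 : |(p:ℝ)+1| = (p:ℝ)+1 := abs_of_nonneg (by positivity)
    have h3 : |(|yk - xk| ^ p)| = |yk - xk| ^ p := abs_of_nonneg (by positivity)
    rw [this, h2, h3]
    calc σ * (((p:ℝ)+1) * |yk - xk| ^ p) = (σ * ((p:ℝ)+1)) * |yk - xk| ^ p := by ring
      _ ≤ 1 * |yk - xk| ^ p := by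
          exact mul_le_mul_of_nonneg_right hσp (by positivity)
      _ = |yk - xk| ^ p := one_mul _
  rw [hykq, e1, e2]
  nlinarith [hkey, e3, pow_nonneg (abs_nonneg (yk - xk)) p]
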